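/- Let m, a, b, n, A, S be as follows: n ≥ 3, (3m+1)/2 ≤ a < b ≤ (5m-1)/3, A ⊆ ℕ with |A| = n-1, min A = a, max A = b, the image of A in ℤ/mℤ a B₃ set of cardinality n-1, and S = ⟨{m} ∪ A⟩ ∪ [4m, ∞). Then the integer interval J = 4m + [⌊(m+1)/3⌋, ⌈(m-1)/2⌉] consists entirely of primitive elements of S, and consequently |P ∩ [4m, 5m-1]| ≥ m/6. -/

import Mathlib

open Set Pointwise

/-- `S` is a numerical semigroup: a cofinite submonoid of `ℕ` containing `0`. -/
def IsNumSgp (S : Set ℕ) : Prop :=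
  0 ∈ S ∧ (∀ a ∈ S, ∀ b ∈ S, a + b ∈ S) ∧ Sᶜ.Finite

/-- multiplicity `m = min (S \ {0})`. -/
noncomputable def NSmult (S : Set ℕ) : ℕ := sInf (S \ {0})

/-- NSconductor: least `c` with `c + ℕ ⊆ S`. -/
noncomputable def NSconductor (S : Set ℕ) : ℕ := sInf {n | ∀ k, n ≤ k → k ∈ S}

/-- primitive elements: nonzero elements not a sum of two nonzero elements of `S`. -/
noncomputable def NSprims (S : Set ℕ) : Set ℕ :=
  {a | a ∈ S ∧ a ≠ 0 ∧ ¬ ∃ x, x ∈ S ∧ x ≠ 0 ∧ ∃ y, y ∈ S ∧ y ≠ 0 ∧ a = x + y}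

/-- `L = S ∩ [0, c-1]`. -/
noncomputable def NSLset (S : Set ℕ) : Set ℕ := S ∩ Set.Iio (NSconductor S)

/-- `q = ⌈c / m⌉`. -/
noncomputable def NSqnum (S : Set ℕ) : ℕ := (NSconductor S + NSmult S - 1) / NSmult S

/-- `ρ = q * m - c`. -/
noncomputable def NSrho (S : Set ℕ) : ℕ := NSqnum S * NSmult S - NSconductor S

/-- `D_q = [c, c+m-1] \ P`, the non-primitive elements of `S` in `[c, c+m-1]`. -/
noncomputable def NSDq (S : Set ℕ) : Set ℕ :=
  Set.Icc (NSconductor S) (NSconductor S + NSmult S - 1) \ NSprims S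

/-- `W(S) = |P| |L| - c`. -/
noncomputable def NSWnum (S : Set ℕ) : ℤ :=
  (NSprims S).ncard * (NSLset S).ncard - NSconductor S

/-- `W₀(S) = |P ∩ L| |L| - q |D_q| + ρ`. -/
noncomputable def NSW0num (S : Set ℕ) : ℤ :=
  (NSprims S ∩ NSLset S).ncard * (NSLset S).ncard - NSqnum S * (NSDq S).ncard + NSrho S

/-- `⟨T⟩_t`: the submonoid generated by `T` together with all integers `≥ t`. -/
noncomputable def NSgenUpTo (T : Set ℕ) (t : ℕ) : Set ℕ :=
  (AddSubmonoid.closure T : Set ℕ) ∪ {n | t ≤ n}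

/-- Apéry set of `S` with respect to `m`: elements `s ∈ S` with `s - m ∉ S`. -/
noncomputable def NSapery (S : Set ℕ) : Set ℕ :=
  {s | s ∈ S ∧ ∀ t, s = t + NSmult S → t ∉ S}

/-- the interval `I_j = [jm - ρ, (j+1)m - ρ - 1]` (intersected with `ℕ`). -/
noncomputable def NSIint (S : Set ℕ) (j : ℕ) : Set ℕ :=
  Set.Icc (j * NSmult S - NSrho S) ((j + 1) * NSmult S - NSrho S - 1)

/-- `X_j = Ap(S,m) ∩ I_j`. -/
noncomputable def NSXj (S : Set ℕ) (j : ℕ) : Set ℕ := NSapery S ∩ NSIint S j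

/-- decomposable elements `D = (S \ {0}) + (S \ {0})`. -/
noncomputable def NSdecomp (S : Set ℕ) : Set ℕ :=
  {s | ∃ x, x ∈ S ∧ x ≠ 0 ∧ ∃ y, y ∈ S ∧ y ≠ 0 ∧ s = x + y}

/-- `h`-fold sumset `hA = A + ⋯ + A`. -/
def hfold {G : Type*} [AddCommMonoid G] : ℕ → Set G → Set G
  | 0, _ => {0}
  | n + 1, A => A + hfold n A

/-- `A` is a `B_h` set: `|hA| = C(|A| + h - 1, h)`. -/
def IsBh {G : Type*} [AddCommMonoid G] (h : ℕ) (A : Set G) : Prop :=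
  (hfold h A).ncard = (A.ncard + h - 1).choose h

/-- representation of elements of the closure -/
lemma closure_rep (m a b : ℕ) (A : Set ℕ) (hmin : IsLeast A a) (hmax : IsGreatest A b)
    (x : ℕ) (hx : x ∈ AddSubmonoid.closure ({m} ∪ A)) :
    ∃ k l t : ℕ, x = k * m + t ∧ l * a ≤ t ∧ t ≤ l * b := by
  induction hx using AddSubmonoid.closure_induction with
  | mem g hg =>
    rcases hg with hg | hg
    · exact ⟨1, 0, 0, by simp [Set.mem_singleton_iff.mp hg], by simp, by simp⟩
    · exact ⟨0, 1, g, by simp, by simpa using hmin.2 hg, by simpa using hmax.2 hg⟩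
  | zero => exact ⟨0, 0, 0, by simp, by simp, by simp⟩
  | add x y _ _ ihx ihy =>
    obtain ⟨k1, l1, t1, hx1, hx2, hx3⟩ := ihx
    obtain ⟨k2, l2, t2, hy1, hy2, hy3⟩ := ihy
    refine ⟨k1 + k2, l1 + l2, t1 + t2, by rw [hx1, hy1]; ring, ?_, ?_⟩
    · nlinarith
    · nlinarith

/-- key arithmetic: no element of the interval has a representation km + t with la ≤ t ≤ lb -/
lemma key_arith (m a b s k l t : ℕ)
    (ha : 3 * m + 1 ≤ 2 * a) (hab : a < b) (hb : 3 * b ≤ 5 * m - 1)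
    (hs1 : 4 * m + (m + 1) / 3 ≤ s) (hs2 : s ≤ 4 * m + m / 2)
    (h1 : l * a ≤ t) (h2 : t ≤ l * b) : k * m + t ≠ s := by
  have hm11 : 11 ≤ m := by omega
  match l with
  | 0 =>
    have ht : t = 0 := by omega
    have : k * m ≤ 4 * m ∨ 5 * m ≤ k * m := by
      rcases le_or_gt k 4 with h | h
      · exact Or.inl (Nat.mul_le_mul_right m h)
      · exact Or.inr (Nat.mul_le_mul_right m h)
    omega
  | 1 =>
    simp only [one_mul] at h1 h2
    have : k * m ≤ 2 * m ∨ 3 * m ≤ k * m := by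
      rcases le_or_gt k 2 with h | h
      · exact Or.inl (Nat.mul_le_mul_right m h)
      · exact Or.inr (Nat.mul_le_mul_right m h)
    omega
  | 2 =>
    have : k * m = 0 ∨ k * m = m ∨ 2 * m ≤ k * m := by
      match k with
      | 0 => exact Or.inl (zero_mul m)
      | 1 => exact Or.inr (Or.inl (one_mul m))
      | (n+2) => exact Or.inr (Or.inr (Nat.mul_le_mul_right m (by omega)))
    omega
  | (l + 3) =>
    have h3 : 3 * a ≤ (l + 3) * a := Nat.mul_le_mul_right a (by omega)
    omega

theorem stmt18 (m a b n : ℕ) (hn : 3 ≤ n) (hm : 0 < m)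
    (ha : 3 * m + 1 ≤ 2 * a) (hab : a < b) (hb : 3 * b ≤ 5 * m - 1)
    (A : Set ℕ) (hfin : A.Finite) (hcard : A.ncard = n - 1)
    (hmin : IsLeast A a) (hmax : IsGreatest A b)
    (himg : ((fun x : ℕ => (x : ZMod m)) '' A).ncard = n - 1)
    (hB3 : IsBh 3 ((fun x : ℕ => (x : ZMod m)) '' A)) :
    Set.Icc (4 * m + (m + 1) / 3) (4 * m + m / 2) ⊆ NSprims (NSgenUpTo ({m} ∪ A) (4 * m)) ∧
      m ≤ 6 * (NSprims (NSgenUpTo ({m} ∪ A) (4 * m)) ∩ Set.Icc (4 * m) (5 * m - 1)).ncard := by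
  have hm11 : 11 ≤ m := by omega
  set S := NSgenUpTo ({m} ∪ A) (4 * m) with hS
  -- nonzero closure elements are ≥ m
  have hlow : ∀ x, x ∈ AddSubmonoid.closure ({m} ∪ A) → x ≠ 0 → m ≤ x := by
    intro x hx hx0
    obtain ⟨k, l, t, h1, h2, h3⟩ := closure_rep m a b A hmin hmax x hx
    match k, l with
    | 0, 0 => omega
    | (k+1), l => nlinarith
    | 0, (l+1) =>
      have : a ≤ (l + 1) * a := Nat.le_mul_of_pos_left a (by omega)
      omega
  have hsub : Set.Icc (4 * m + (m + 1) / 3) (4 * m + m / 2) ⊆ NSprims S := by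
    intro s hs
    simp only [Set.mem_Icc] at hs
    refine ⟨Or.inr (by simp only [Set.mem_setOf_eq]; omega), by omega, ?_⟩
    rintro ⟨x, hxS, hx0, y, hyS, hy0, hsxy⟩
    rcases hxS with hx | hx
    · rcases hyS with hy | hy
      · -- both in closure
        have hsum : s ∈ AddSubmonoid.closure ({m} ∪ A) := by
          rw [hsxy]; exact AddSubmonoid.add_mem _ hx hy
        obtain ⟨k, l, t, h1, h2, h3⟩ := closure_rep m a b A hmin hmax s hsum
        exact key_arith m a b s k l t ha hab hb hs.1 hs.2 h2 h3 h1.symm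
      · have := hlow x hx hx0
        simp only [Set.mem_setOf_eq] at hy
        omega
    · simp only [Set.mem_setOf_eq] at hx
      rcases hyS with hy | hy
      · have := hlow y hy hy0
        omega
      · simp only [Set.mem_setOf_eq] at hy
        omega
  refine ⟨hsub, ?_⟩
  have hsub2 : Set.Icc (4 * m + (m + 1) / 3) (4 * m + m / 2) ⊆
      NSprims S ∩ Set.Icc (4 * m) (5 * m - 1) := by
    intro s hs
    simp only [Set.mem_Icc] at hs
    exact ⟨hsub (Set.mem_Icc.mpr hs), Set.mem_Icc.mpr (by omega)⟩
  have hfin2 : (NSprims S ∩ Set.Icc (4 * m) (5 * m - 1)).Finite :=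
    (Set.finite_Icc _ _).subset (Set.inter_subset_right)
  have hcard2 := Set.ncard_le_ncard hsub2 hfin2
  have hIcc : (Set.Icc (4 * m + (m + 1) / 3) (4 * m + m / 2)).ncard
      = (4 * m + m / 2) + 1 - (4 * m + (m + 1) / 3) := by
    simp [Set.ncard_eq_toFinset_card', Set.toFinset_Icc]
  omega
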